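/- Let X be a finite nonempty set, μ a probability vector on X with μ(x) > 0 for all x, r : X → ℝ, and α > 0, ε > 0. Then the infimum of Σ_x μ(x)·r̃(x) over all r̃ : X → ℝ satisfying LSE_X((r − r̃)/α) ≤ ε/α + log|X| equals Σ_x μ(x)·r(x) − ε + α·(H(μ) − log|X|), and this infimum is attained by r̃(x) = r(x) − α·log μ(x) − ε − α·log|X|. (Instantiated with X = S×A and μ the state–action occupancy, this is the state–action-entropy reward-robustness duality.) -/

import Mathlib

open Real Finset

/-- Gibbs / Donsker–Varadhan inequality: `∑ μ (u - log μ) ≤ log ∑ exp u`. -/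
lemma gibbs_aux {X : Type*} [Fintype X] [Nonempty X]
    (μ : X → ℝ) (hμ0 : ∀ x, 0 < μ x) (hμ1 : ∑ x, μ x = 1) (u : X → ℝ) :
    ∑ x, μ x * (u x - Real.log (μ x)) ≤ Real.log (∑ x, Real.exp (u x)) := by
  set Z : ℝ := ∑ x, Real.exp (u x) with hZdef
  have hZ : 0 < Z := Finset.sum_pos (fun x _ => Real.exp_pos _) Finset.univ_nonempty
  have key : ∀ x, μ x * (u x - Real.log (μ x)) ≤
      Real.exp (u x) / Z - μ x + μ x * Real.log Z := by
    intro x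
    have hx := hμ0 x
    have ht : 0 < Real.exp (u x) / (μ x * Z) := by positivity
    have hlog : Real.log (Real.exp (u x) / (μ x * Z)) ≤
        Real.exp (u x) / (μ x * Z) - 1 := Real.log_le_sub_one_of_pos ht
    have hlogeq : Real.log (Real.exp (u x) / (μ x * Z)) =
        u x - Real.log (μ x) - Real.log Z := by
      rw [Real.log_div (Real.exp_ne_zero _) (by positivity),
        Real.log_exp, Real.log_mul hx.ne' hZ.ne']
      ring
    have h2 : u x - Real.log (μ x) - Real.log Z ≤ Real.exp (u x) / (μ x * Z) - 1 := by
      rw [← hlogeq]; exact hlog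
    have h3 := mul_le_mul_of_nonneg_left h2 hx.le
    calc μ x * (u x - Real.log (μ x))
        = μ x * (u x - Real.log (μ x) - Real.log Z) + μ x * Real.log Z := by ring
      _ ≤ μ x * (Real.exp (u x) / (μ x * Z) - 1) + μ x * Real.log Z := by linarith
      _ = Real.exp (u x) / Z - μ x + μ x * Real.log Z := by
          field_simp
  calc ∑ x, μ x * (u x - Real.log (μ x))
      ≤ ∑ x, (Real.exp (u x) / Z - μ x + μ x * Real.log Z) :=
        Finset.sum_le_sum fun x _ => key x
    _ = (∑ x, Real.exp (u x)) / Z - (∑ x, μ x) + (∑ x, μ x) * Real.log Z := by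
        rw [Finset.sum_add_distrib, Finset.sum_sub_distrib, ← Finset.sum_div,
          ← Finset.sum_mul]
    _ = Real.log Z := by
        rw [hμ1, ← hZdef, div_self hZ.ne']; ring

/-- **State–action-entropy reward-robustness duality (generic form).**
For a finite nonempty set `X`, a strictly positive probability vector `μ` and `r : X → ℝ`,
the minimum of `∑ μ r̃` over `r̃` with `LSE((r − r̃)/α) ≤ ε/α + log |X|` equals
`∑ μ r − ε + α (H(μ) − log |X|)`, attained at
`r̃(x) = r(x) − α log μ(x) − ε − α log |X|`. -/
theorem stmt_4 {X : Type*} [Fintype X] [Nonempty X]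
    (μ : X → ℝ) (hμ0 : ∀ x, 0 < μ x) (hμ1 : ∑ x, μ x = 1)
    (r : X → ℝ) (α ε : ℝ) (hα : 0 < α) (hε : 0 < ε) :
    IsLeast
      { v : ℝ | ∃ rt : X → ℝ,
          (Real.log (∑ x, Real.exp ((r x - rt x) / α))
            ≤ ε / α + Real.log (Fintype.card X)) ∧
          v = ∑ x, μ x * rt x }
      ((∑ x, μ x * r x) - ε
        + α * ((-∑ x, μ x * Real.log (μ x)) - Real.log (Fintype.card X))) ∧
    (Real.log (∑ x, Real.exp
        ((r x - (r x - α * Real.log (μ x) - ε - α * Real.log (Fintype.card X))) / α))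
      ≤ ε / α + Real.log (Fintype.card X)) ∧
    (∑ x, μ x * (r x - α * Real.log (μ x) - ε - α * Real.log (Fintype.card X))
      = (∑ x, μ x * r x) - ε
        + α * ((-∑ x, μ x * Real.log (μ x)) - Real.log (Fintype.card X))) := by
  have hcon : Real.log (∑ x, Real.exp
      ((r x - (r x - α * Real.log (μ x) - ε - α * Real.log (Fintype.card X))) / α))
      ≤ ε / α + Real.log (Fintype.card X) := by
    have heq : ∀ x : X,
        (r x - (r x - α * Real.log (μ x) - ε - α * Real.log (Fintype.card X))) / α
          = Real.log (μ x) + (ε / α + Real.log (Fintype.card X)) := by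
      intro x; field_simp; ring
    have : (∑ x, Real.exp
        ((r x - (r x - α * Real.log (μ x) - ε - α * Real.log (Fintype.card X))) / α))
        = Real.exp (ε / α + Real.log (Fintype.card X)) := by
      simp_rw [heq, Real.exp_add, ← Finset.sum_mul]
      have : ∀ x : X, Real.exp (Real.log (μ x)) = μ x := fun x => Real.exp_log (hμ0 x)
      simp_rw [this, hμ1, one_mul]
    rw [this, Real.log_exp]
  have hval : ∑ x, μ x * (r x - α * Real.log (μ x) - ε - α * Real.log (Fintype.card X))
      = (∑ x, μ x * r x) - ε
        + α * ((-∑ x, μ x * Real.log (μ x)) - Real.log (Fintype.card X)) := by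
    have : ∀ x : X, μ x * (r x - α * Real.log (μ x) - ε - α * Real.log (Fintype.card X))
        = μ x * r x - α * (μ x * Real.log (μ x))
          - (ε + α * Real.log (Fintype.card X)) * μ x := by intro x; ring
    simp_rw [this, Finset.sum_sub_distrib, ← Finset.mul_sum, hμ1]
    ring
  refine ⟨⟨⟨fun x => r x - α * Real.log (μ x) - ε - α * Real.log (Fintype.card X),
      hcon, hval.symm⟩, ?_⟩, hcon, hval⟩
  rintro v ⟨rt, hrt, rfl⟩
  have hg := gibbs_aux μ hμ0 hμ1 (fun x => (r x - rt x) / α)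
  have hle : ∑ x, μ x * ((r x - rt x) / α - Real.log (μ x))
      ≤ ε / α + Real.log (Fintype.card X) := le_trans hg hrt
  have h2 := mul_le_mul_of_nonneg_left hle hα.le
  have hexp : α * ∑ x, μ x * ((r x - rt x) / α - Real.log (μ x))
      = (∑ x, μ x * r x) - (∑ x, μ x * rt x) - α * ∑ x, μ x * Real.log (μ x) := by
    rw [Finset.mul_sum, show (∑ x, μ x * r x) - (∑ x, μ x * rt x)
        - α * ∑ x, μ x * Real.log (μ x)
        = ∑ x, (μ x * r x - μ x * rt x - α * (μ x * Real.log (μ x))) by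
      rw [Finset.mul_sum, Finset.sum_sub_distrib, Finset.sum_sub_distrib]]
    apply Finset.sum_congr rfl
    intro x _
    field_simp
  have h3 : α * (ε / α + Real.log (Fintype.card X)) = ε + α * Real.log (Fintype.card X) := by
    field_simp
  rw [hexp, h3] at h2
  linarith
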